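/- Let X be a real Banach space, x ∈ S(X), and δ > 0. Then d₁(x, δ) ≤ d₃(x, 2δ), where d₁(x, δ) = sup over 0 < λ < δ, y ∈ B(X) of (‖x + λy‖ + ‖x − λy‖ − 2)/λ, and d₃(x, 2δ) = diam D(S(X) ∩ B(x, 2δ)). -/

import Mathlib

open NormedSpace

/-- Normalization of a nonzero vector close to `x` lies within `2λ` of `x`. -/
lemma aux_norm_close {X : Type*} [NormedAddCommGroup X] [NormedSpace ℝ X]
    (x u : X) (hx : ‖x‖ = 1) (hu : u ≠ 0) (lam : ℝ) (hlam : ‖u - x‖ ≤ lam) :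
    ‖(‖u‖⁻¹ • u) - x‖ ≤ 2 * lam := by
  have hun : (0:ℝ) < ‖u‖ := norm_pos_iff.mpr hu
  have h1 : (‖u‖⁻¹ • u) - x = (‖u‖⁻¹ - 1) • u + (u - x) := by
    rw [sub_smul, one_smul]; abel
  have h2 : ‖(‖u‖⁻¹ - 1) • u‖ = |1 - ‖u‖| := by
    rw [norm_smul, Real.norm_eq_abs, ← abs_of_pos hun, ← abs_mul]
    congr 1
    field_simp
    simp only [abs_norm]; ring
  have h3 : |1 - ‖u‖| ≤ lam := by
    rw [← hx, abs_sub_comm]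
    exact (abs_norm_sub_norm_le u x).trans hlam
  calc ‖(‖u‖⁻¹ • u) - x‖ ≤ ‖(‖u‖⁻¹ - 1) • u‖ + ‖u - x‖ := by rw [h1]; exact norm_add_le _ _
    _ ≤ lam + lam := add_le_add (h2 ▸ h3) hlam
    _ = 2 * lam := by ring

/-- Lemma: `d₁(x, δ) ≤ d₃(x, 2δ)`. -/
theorem stmt_6 {X : Type*} [NormedAddCommGroup X] [NormedSpace ℝ X] [CompleteSpace X]
    (x : X) (hx : ‖x‖ = 1) (δ : ℝ) (hδ : 0 < δ) :
    sSup {r : ℝ | ∃ lam : ℝ, ∃ y : X, 0 < lam ∧ lam < δ ∧ ‖y‖ ≤ 1 ∧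
        r = (‖x + lam • y‖ + ‖x - lam • y‖ - 2) / lam} ≤
      Metric.diam {f : StrongDual ℝ X | ‖f‖ = 1 ∧
        ∃ z : X, ‖z‖ = 1 ∧ ‖z - x‖ < 2 * δ ∧ f z = 1} := by
  set D : Set (StrongDual ℝ X) := {f : StrongDual ℝ X | ‖f‖ = 1 ∧
        ∃ z : X, ‖z‖ = 1 ∧ ‖z - x‖ < 2 * δ ∧ f z = 1} with hD_def
  have hDb : Bornology.IsBounded D := by
    apply (Metric.isBounded_closedBall (x := (0 : StrongDual ℝ X)) (r := 1)).subset
    intro f hf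
    simp [Metric.mem_closedBall, dist_zero_right, hf.1]
  apply Real.sSup_le
  · rintro r ⟨lam, y, hl0, hld, hy, rfl⟩
    rcases le_or_gt ((‖x + lam • y‖ + ‖x - lam • y‖ - 2) / lam) 0 with h | h
    · exact h.trans Metric.diam_nonneg
    · have hsum : 2 < ‖x + lam • y‖ + ‖x - lam • y‖ := by
        by_contra hc
        push_neg at hc
        exact absurd (div_nonpos_of_nonpos_of_nonneg (by linarith) hl0.le) (not_le.mpr h)
      set u := x + lam • y with hu_def
      set v := x - lam • y with hv_def
      have hlam' : ‖lam • y‖ ≤ lam := by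
        rw [norm_smul, Real.norm_eq_abs, abs_of_pos hl0]; nlinarith
      have hlu : ‖u - x‖ ≤ lam := by
        have huu : u - x = lam • y := by rw [hu_def]; abel
        rw [huu]; exact hlam'
      have hlv : ‖v - x‖ ≤ lam := by
        have hvv : v - x = -(lam • y) := by rw [hv_def]; abel
        rw [hvv, norm_neg]; exact hlam'
      have h2x : ‖x + x‖ = 2 := by
        have : x + x = (2:ℝ) • x := by module
        rw [this, norm_smul, hx]; norm_num
      have hune : u ≠ 0 := by
        intro h0
        have hly : lam • y = -x := by
          have := h0; rw [hu_def] at this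
          linear_combination (norm := module) this
        have hv2 : v = x + x := by rw [hv_def, hly]; abel
        rw [h0, hv2, norm_zero, h2x] at hsum; linarith
      have hvne : v ≠ 0 := by
        intro h0
        have hly : lam • y = x := by
          have := h0; rw [hv_def] at this
          linear_combination (norm := module) (-this)
        have hu2 : u = x + x := by rw [hu_def, hly]
        rw [h0, hu2, norm_zero, h2x] at hsum; linarith
      obtain ⟨f, hf1, hfu⟩ := exists_dual_vector ℝ u (norm_ne_zero_iff.mpr hune)
      obtain ⟨g, hg1, hgv⟩ := exists_dual_vector ℝ v (norm_ne_zero_iff.mpr hvne)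
      have hfu : f u = ‖u‖ := by exact_mod_cast hfu
      have hgv : g v = ‖v‖ := by exact_mod_cast hgv
      have hun : (0:ℝ) < ‖u‖ := norm_pos_iff.mpr hune
      have hvn : (0:ℝ) < ‖v‖ := norm_pos_iff.mpr hvne
      have hfD : f ∈ D := by
        refine ⟨hf1, ‖u‖⁻¹ • u, ?_, ?_, ?_⟩
        · rw [norm_smul, Real.norm_eq_abs, abs_of_pos (inv_pos.mpr hun),
            inv_mul_cancel₀ hun.ne']
        · exact (aux_norm_close x u hx hune lam hlu).trans_lt (by linarith)
        · rw [map_smul, smul_eq_mul, hfu, inv_mul_cancel₀ hun.ne']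
      have hgD : g ∈ D := by
        refine ⟨hg1, ‖v‖⁻¹ • v, ?_, ?_, ?_⟩
        · rw [norm_smul, Real.norm_eq_abs, abs_of_pos (inv_pos.mpr hvn),
            inv_mul_cancel₀ hvn.ne']
        · exact (aux_norm_close x v hx hvne lam hlv).trans_lt (by linarith)
        · rw [map_smul, smul_eq_mul, hgv, inv_mul_cancel₀ hvn.ne']
      have hfx : f x ≤ 1 := by
        calc f x ≤ |f x| := le_abs_self _
          _ ≤ ‖f‖ * ‖x‖ := f.le_opNorm x
          _ = 1 := by rw [hf1, hx, one_mul]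
      have hgx : g x ≤ 1 := by
        calc g x ≤ |g x| := le_abs_self _
          _ ≤ ‖g‖ * ‖x‖ := g.le_opNorm x
          _ = 1 := by rw [hg1, hx, one_mul]
      have hfu' : f x + lam * f y = ‖u‖ := by
        rw [← hfu, hu_def, map_add, map_smul, smul_eq_mul]
      have hgv' : g x - lam * g y = ‖v‖ := by
        rw [← hgv, hv_def, map_sub, map_smul, smul_eq_mul]
      have step1 : (‖u‖ + ‖v‖ - 2) / lam ≤ f y - g y := by
        rw [div_le_iff₀ hl0]
        nlinarith
      have step2 : f y - g y ≤ ‖f - g‖ := by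
        calc f y - g y = (f - g) y := by simp
          _ ≤ |(f - g) y| := le_abs_self _
          _ ≤ ‖f - g‖ * ‖y‖ := (f - g).le_opNorm y
          _ ≤ ‖f - g‖ * 1 := by
              exact mul_le_mul_of_nonneg_left hy (norm_nonneg _)
          _ = ‖f - g‖ := mul_one _
      have step3 : ‖f - g‖ ≤ Metric.diam D := by
        rw [← dist_eq_norm]
        exact Metric.dist_le_diam_of_mem hDb hfD hgD
      calc (‖u‖ + ‖v‖ - 2) / lam ≤ f y - g y := step1
        _ ≤ ‖f - g‖ := step2
        _ ≤ Metric.diam D := step3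
  · exact Metric.diam_nonneg
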